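/- The quadratic function s : {-1,1}^4 → ℝ defined by s(x,y,z,w) = (xy − zw)/2 + ((√2 − 1)/8)(xz + yw) satisfies |s(v)| ≤ 1 for all v ∈ {-1,1}^4 and Δ(s)(v) = 2 for every v ∈ {-1,1}^4; hence its total L1 influence equals 2, matching its degree. -/

import Mathlib

open Finset

/-- The Fourier character χ_S evaluated at a point of the Boolean cube
(coordinates encoded by `Bool`, with `true ↦ 1` and `false ↦ -1`). -/
noncomputable def char {n : ℕ} (S : Finset (Fin n)) (x : Fin n → Bool) : ℝ :=
  ∏ i ∈ S, (if x i then (1 : ℝ) else -1)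

/-- The multilinear polynomial with Fourier coefficients `c`, evaluated on the cube. -/
noncomputable def eval' {n : ℕ} (c : Finset (Fin n) → ℝ) (x : Fin n → Bool) : ℝ :=
  ∑ S : Finset (Fin n), c S * char S x

/-- Flip the i-th coordinate. -/
def flipAt {n : ℕ} (x : Fin n → Bool) (i : Fin n) : Fin n → Bool :=
  Function.update x i (!(x i))

/-- Expectation over the uniform measure on the cube. -/
noncomputable def Ex {n : ℕ} (g : (Fin n → Bool) → ℝ) : ℝ :=
  (∑ x : Fin n → Bool, g x) / 2 ^ n

noncomputable def bval (b : Bool) : ℝ := if b then 1 else -1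

set_option maxHeartbeats 4000000 in
theorem s_example :
    let s : (Fin 4 → Bool) → ℝ := fun v =>
      (bval (v 0) * bval (v 1) - bval (v 2) * bval (v 3)) / 2
      + ((Real.sqrt 2 - 1) / 8) * (bval (v 0) * bval (v 2) + bval (v 1) * bval (v 3))
    (∀ v, |s v| ≤ 1) ∧
    (∀ v, ∑ i : Fin 4, |s v - s (flipAt v i)| / 2 = 2) ∧
    (∑ i : Fin 4, Ex (fun v => |s v - s (flipAt v i)| / 2)) = 2 := by
  intro s
  have hs1 : (1:ℝ) ≤ Real.sqrt 2 := by
    nlinarith [Real.sq_sqrt (by norm_num : (2:ℝ) ≥ 0), Real.sqrt_nonneg 2]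
  have hs2 : Real.sqrt 2 ≤ 3/2 := by
    nlinarith [Real.sq_sqrt (by norm_num : (2:ℝ) ≥ 0), Real.sqrt_nonneg 2]
  have habs : ∀ v, |s v| ≤ 1 := by
    intro v
    cases h0 : v 0 <;> cases h1 : v 1 <;> cases h2 : v 2 <;> cases h3 : v 3 <;>
      simp only [s, bval, h0, h1, h2, h3] <;> norm_num <;>
      first
      | (rw [abs_le]; constructor <;> linarith)
      | (rw [abs_of_nonneg (by linarith : (0:ℝ) ≤ (Real.sqrt 2 - 1) / 8)]; linarith)
  have hDelta : ∀ v, ∑ i : Fin 4, |s v - s (flipAt v i)| / 2 = 2 := by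
    intro v
    cases h0 : v 0 <;> cases h1 : v 1 <;> cases h2 : v 2 <;> cases h3 : v 3 <;>
      simp only [s, Fin.sum_univ_four, flipAt, Function.update_apply, bval, h0, h1, h2, h3] <;>
      norm_num [Fin.ext_iff, show ((3:Fin 4):ℕ) = 3 from rfl,
        show ((2:Fin 4):ℕ) = 2 from rfl, show ((1:Fin 4):ℕ) = 1 from rfl,
        show ((0:Fin 4):ℕ) = 0 from rfl] <;>
      ring_nf <;>
      first
      | (rw [abs_of_nonneg (by linarith), abs_of_nonneg (by linarith)]; linarith)
      | (rw [abs_of_nonneg (by linarith), abs_of_nonpos (by linarith)]; linarith)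
      | (rw [abs_of_nonpos (by linarith), abs_of_nonneg (by linarith)]; linarith)
      | (rw [abs_of_nonpos (by linarith), abs_of_nonpos (by linarith)]; linarith)
  refine ⟨habs, hDelta, ?_⟩
  simp only [Ex]
  rw [← Finset.sum_div, Finset.sum_comm]
  rw [Finset.sum_congr rfl (fun x _ => hDelta x)]
  simp only [Finset.sum_const, Finset.card_univ]
  norm_num
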